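/- Let G be a strongly edge-colored graph, M a maximum rainbow matching of G, and H the induced subgraph on V(G) \ V(M). Suppose e ∈ M is incident (in G) to an edge f with one endpoint in V(H) such that the color of f does not appear on M. Then no edge e′ of H has the same color as e. -/

import Mathlib

open SimpleGraph

def StronglyEdgeColored {V C : Type*} (G : SimpleGraph V) (c : Sym2 V → C) : Prop :=
  ∀ a b x y : V, G.Adj a b → G.Adj x y → c s(a, b) = c s(x, y) →
    s(a, b) = s(x, y) ∨
      (a ≠ x ∧ a ≠ y ∧ b ≠ x ∧ b ≠ y ∧
        ¬G.Adj a x ∧ ¬G.Adj a y ∧ ¬G.Adj b x ∧ ¬G.Adj b y)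

lemma matching_deleteVerts {V : Type*} {G : SimpleGraph V} {M : G.Subgraph}
    (hM : M.IsMatching) {x y : V} (hxy : M.Adj x y) :
    (M.deleteVerts {x, y}).IsMatching := by
  rintro v ⟨hv, hvxy⟩
  obtain ⟨u, hu1, hu2⟩ := hM hv
  simp only [Set.mem_insert_iff, Set.mem_singleton_iff, not_or] at hvxy
  have hux : u ≠ x := by
    rintro rfl
    obtain ⟨t, ht1, ht2⟩ := hM (M.edge_vert hxy)
    exact hvxy.2 ((ht2 v hu1.symm).trans (ht2 y hxy).symm)
  have huy : u ≠ y := by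
    rintro rfl
    obtain ⟨t, ht1, ht2⟩ := hM (M.edge_vert hxy.symm)
    exact hvxy.1 ((ht2 v hu1.symm).trans (ht2 x hxy.symm).symm)
  refine ⟨u, ?_, ?_⟩
  · simp only [SimpleGraph.Subgraph.deleteVerts_adj]
    exact ⟨hv, by simp [hvxy.1, hvxy.2], M.edge_vert hu1.symm, by simp [hux, huy], hu1⟩
  · intro u' hu'
    exact hu2 u' ((SimpleGraph.Subgraph.deleteVerts_adj.mp hu').2.2.2.2)

lemma edgeSet_deleteVerts {V : Type*} {G : SimpleGraph V} {M : G.Subgraph}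
    (hM : M.IsMatching) {x y : V} (hxy : M.Adj x y) :
    (M.deleteVerts {x, y}).edgeSet = M.edgeSet \ {s(x, y)} := by
  ext e
  induction e with
  | h u v =>
    simp only [SimpleGraph.Subgraph.mem_edgeSet, SimpleGraph.Subgraph.deleteVerts_adj,
      Set.mem_diff, Set.mem_singleton_iff, Set.mem_insert_iff, not_or]
    constructor
    · rintro ⟨hu, ⟨hux, huy⟩, hv, ⟨hvx, hvy⟩, hadj⟩
      refine ⟨hadj, ?_⟩
      rw [Sym2.eq_iff]
      rintro (⟨rfl, rfl⟩ | ⟨rfl, rfl⟩) <;> simp at hux huy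
    · rintro ⟨hadj, hne⟩
      have key : ∀ p q : V, M.Adj p q → s(p, q) ≠ s(x, y) → p ≠ x ∧ p ≠ y := by
        intro p q hpq hne'
        constructor
        · rintro rfl
          obtain ⟨t, ht1, ht2⟩ := hM (M.edge_vert hpq)
          exact hne' (by rw [(ht2 q hpq).trans (ht2 y hxy).symm])
        · rintro rfl
          obtain ⟨t, ht1, ht2⟩ := hM (M.edge_vert hpq)
          have : q = x := (ht2 q hpq).trans (ht2 x hxy.symm).symm
          exact hne' (by rw [this, Sym2.eq_swap])
      obtain ⟨hux, huy⟩ := key u v hadj hne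
      obtain ⟨hvx, hvy⟩ := key v u hadj.symm (by rwa [Sym2.eq_swap])
      exact ⟨M.edge_vert hadj, ⟨hux, huy⟩, M.edge_vert hadj.symm, ⟨hvx, hvy⟩, hadj⟩

theorem stmt_14 {V C : Type*} [Fintype V] (G : SimpleGraph V) (c : Sym2 V → C)
    (hSEC : StronglyEdgeColored G c)
    (M : G.Subgraph) (hM : M.IsMatching) (hMrainbow : Set.InjOn c M.edgeSet)
    (hMmax : ∀ M' : G.Subgraph, M'.IsMatching → Set.InjOn c M'.edgeSet →
      M'.edgeSet.ncard ≤ M.edgeSet.ncard)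
    -- `e = s(x, y)` is an edge of `M`, and `f = s(z, w)` is an edge of `G`
    -- incident to `e` whose other endpoint `w` lies outside `V(M)`,
    -- with the color of `f` not appearing on `M`.
    (x y : V) (he : s(x, y) ∈ M.edgeSet)
    (z w : V) (hf : G.Adj z w) (hz : z = x ∨ z = y) (hw : w ∉ M.verts)
    (hcf : c s(z, w) ∉ c '' M.edgeSet) :
    ∀ a b : V, G.Adj a b → a ∉ M.verts → b ∉ M.verts → c s(a, b) ≠ c s(x, y) := by
  intro a b hab ha hb hcab
  have hxyM : M.Adj x y := SimpleGraph.Subgraph.mem_edgeSet.mp he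
  have hxyG : G.Adj x y := M.adj_sub hxyM
  have hxv : x ∈ M.verts := M.edge_vert hxyM
  have hyv : y ∈ M.verts := M.edge_vert hxyM.symm
  -- strong edge coloring case analysis
  obtain heq | ⟨hax, hay, hbx, hby, hnax, hnay, hnbx, hnby⟩ :=
    hSEC a b x y hab hxyG hcab
  · rw [Sym2.eq_iff] at heq
    rcases heq with ⟨rfl, rfl⟩ | ⟨rfl, rfl⟩ <;> exact ha (by assumption)
  -- w is distinct from a, b
  have hwa : w ≠ a := by
    rintro rfl
    rcases hz with rfl | rfl
    · exact hnax hf.symm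
    · exact hnay hf.symm
  have hwb : w ≠ b := by
    rintro rfl
    rcases hz with rfl | rfl
    · exact hnbx hf.symm
    · exact hnby hf.symm
  have hzab : z ≠ a ∧ z ≠ b := by
    rcases hz with rfl | rfl
    · exact ⟨fun h => hax h.symm, fun h => hbx h.symm⟩
    · exact ⟨fun h => hay h.symm, fun h => hby h.symm⟩
  -- build the bigger rainbow matching
  set M' : G.Subgraph :=
    (M.deleteVerts {x, y}) ⊔ (G.subgraphOfAdj hab ⊔ G.subgraphOfAdj hf) with hM'def
  have hD : (M.deleteVerts {x, y}).IsMatching := matching_deleteVerts hM hxyM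
  have hDverts : (M.deleteVerts {x, y}).verts = M.verts \ {x, y} :=
    SimpleGraph.Subgraph.deleteVerts_verts
  have hDsupp : (M.deleteVerts {x, y}).support ⊆ M.verts \ {x, y} := by
    rw [hD.support_eq_verts, hDverts]
  have hzv : z ∈ M.verts := by rcases hz with rfl | rfl <;> assumption
  have hM'match : M'.IsMatching := by
    refine SimpleGraph.Subgraph.IsMatching.sup hD
      (SimpleGraph.Subgraph.IsMatching.sup
        (SimpleGraph.Subgraph.IsMatching.subgraphOfAdj hab)
        (SimpleGraph.Subgraph.IsMatching.subgraphOfAdj hf) ?_) ?_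
    · rw [SimpleGraph.support_subgraphOfAdj, SimpleGraph.support_subgraphOfAdj]
      refine Set.disjoint_left.mpr fun v hv hv' => ?_
      simp only [Set.mem_insert_iff, Set.mem_singleton_iff] at hv hv'
      obtain ⟨hza, hzb⟩ := hzab
      rcases hv with rfl | rfl <;> rcases hv' with h | h <;> simp_all
    · refine Set.disjoint_left.mpr fun v hv hv' => ?_
      have hvM := hDsupp hv
      have : v ∈ ({a, b} : Set V) ∪ {z, w} := by
        obtain ⟨u, hu⟩ := (SimpleGraph.Subgraph.mem_support _).mp hv'
        rcases SimpleGraph.Subgraph.sup_adj.mp hu with h | h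
        · exact Or.inl (SimpleGraph.support_subgraphOfAdj hab ▸
            (SimpleGraph.Subgraph.mem_support _).mpr ⟨u, h⟩)
        · exact Or.inr (SimpleGraph.support_subgraphOfAdj hf ▸
            (SimpleGraph.Subgraph.mem_support _).mpr ⟨u, h⟩)
      rcases this with h | h
      · rcases h with rfl | rfl
        exacts [ha hvM.1, hb hvM.1]
      · rcases h with rfl | rfl
        · exact hvM.2 (by rcases hz with rfl | rfl <;> simp)
        · exact hw hvM.1
  have hE' : M'.edgeSet = (M.edgeSet \ {s(x, y)}) ∪ ({s(a, b)} ∪ {s(z, w)}) := by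
    rw [hM'def, SimpleGraph.Subgraph.edgeSet_sup, SimpleGraph.Subgraph.edgeSet_sup,
      edgeSet_deleteVerts hM hxyM, SimpleGraph.edgeSet_subgraphOfAdj,
      SimpleGraph.edgeSet_subgraphOfAdj]
  have habE : s(a, b) ∉ M.edgeSet := fun h => ha (M.edge_vert h)
  have hzwE : s(z, w) ∉ M.edgeSet := fun h => hw (M.edge_vert (SimpleGraph.Subgraph.mem_edgeSet.mp h).symm)
  have hcabne : c s(a, b) ≠ c s(z, w) := by
    intro h
    exact hcf (h ▸ hcab ▸ ⟨s(x, y), he, rfl⟩)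
  have hM'rainbow : Set.InjOn c M'.edgeSet := by
    rw [hE']
    rintro e1 he1 e2 he2 hc12
    have mem_char : ∀ e, e ∈ (M.edgeSet \ {s(x, y)}) ∪ ({s(a, b)} ∪ {s(z, w)}) →
        (e ∈ M.edgeSet ∧ e ≠ s(x, y)) ∨ e = s(a, b) ∨ e = s(z, w) := by
      rintro e (⟨h1, h2⟩ | (h | h)) <;> simp_all
    rcases mem_char e1 he1 with h1 | h1 | h1 <;> rcases mem_char e2 he2 with h2 | h2 | h2
    · exact hMrainbow h1.1 h2.1 hc12
    · subst h2; exact absurd (hMrainbow h1.1 he (hc12.trans hcab)) h1.2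
    · subst h2; exact absurd ⟨e1, h1.1, hc12⟩ hcf
    · subst h1; exact absurd (hMrainbow h2.1 he (hc12.symm.trans hcab)) h2.2
    · exact h1.trans h2.symm
    · subst h1; subst h2; exact absurd hc12 hcabne
    · subst h1; exact absurd ⟨e2, h2.1, hc12.symm⟩ hcf
    · subst h1; subst h2; exact absurd hc12.symm hcabne
    · exact h1.trans h2.symm
  have hle := hMmax M' hM'match hM'rainbow
  -- cardinality computation
  have hfin : M.edgeSet.Finite := Set.toFinite _
  have hne12 : s(a, b) ≠ s(z, w) := fun h => hcabne (by rw [h])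
  have habD : s(a, b) ∉ M.edgeSet \ {s(x, y)} := fun h => habE h.1
  have hzwD : s(z, w) ∉ M.edgeSet \ {s(x, y)} := fun h => hzwE h.1
  have hcard : M'.edgeSet.ncard = M.edgeSet.ncard + 1 := by
    rw [hE']
    have : (M.edgeSet \ {s(x, y)}) ∪ ({s(a, b)} ∪ {s(z, w)})
        = insert s(a, b) (insert s(z, w) (M.edgeSet \ {s(x, y)})) := by
      ext e; simp [or_comm, or_assoc, or_left_comm]
    rw [this, Set.ncard_insert_of_notMem (by simp [habD, hne12])
        (hfin.diff.insert _),
      Set.ncard_insert_of_notMem hzwD hfin.diff,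
      Set.ncard_diff_singleton_of_mem he]
    have hpos : 0 < M.edgeSet.ncard := Set.ncard_pos (s := M.edgeSet) hfin |>.mpr ⟨_, he⟩
    omega
  omega
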